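/- Consider the stochastic volatility model X_t = σ_t Z_t, t∈ℤ, where (σ_t) is a positive stationary sequence independent of the iid sequence (Z_t), and |Z| is regularly varying with index α>0. If E[σ^{2α+δ}]<∞ for some δ>0, then for each h≥1, P(|X_h|>x, |X_0|>x) ≤ P((σ_h∨σ_0)(|Z_0|∧|Z_h|)>x) ~ E[(σ_h∨σ_0)^{2α}]·(P(|Z|>x))² as x→∞; since moreover P(|X|>x) ~ E[σ^{α}]·P(|Z|>x) (Breiman's lemma), it follows that P(|X_h|>x | |X_0|>x) → 0 for every h≥1, i.e. condition RV3 holds and (X_t) is asymptotically independent. -/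

import Mathlib

open MeasureTheory ProbabilityTheory Filter Set Asymptotics
open scoped ENNReal NNReal Topology

namespace PLD

variable {Ω : Type*} [MeasureSpace Ω]

/-- Probability of an event, as a real number. -/
noncomputable def pr (A : Set Ω) : ℝ := (ℙ A).toReal

/-- The tail `P(X > x)` of a real random variable. -/
noncomputable def tail (X : Ω → ℝ) (x : ℝ) : ℝ := pr {ω | x < X ω}

/-- The two-sided tail `P(|X| > x)`. -/
noncomputable def atail (X : Ω → ℝ) (x : ℝ) : ℝ := pr {ω | x < |X ω|}

/-- The tail of a measure on `ℝ`. -/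
noncomputable def mtail (μ : Measure ℝ) (x : ℝ) : ℝ := (μ (Set.Ioi x)).toReal

/-- Partial sums `X_0 + ⋯ + X_{n-1}`. -/
def psum (X : ℕ → Ω → ℝ) (n : ℕ) (ω : Ω) : ℝ := ∑ i ∈ Finset.range n, X i ω

/-- A function is slowly varying at infinity. -/
def SlowlyVarying (L : ℝ → ℝ) : Prop :=
  ∀ c : ℝ, 0 < c → Tendsto (fun x => L (c * x) / L x) atTop (𝓝 1)

/-- A function is regularly varying of index `ρ` at infinity. -/
def RegularlyVaryingFun (f : ℝ → ℝ) (ρ : ℝ) : Prop :=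
  ∀ c : ℝ, 0 < c → Tendsto (fun x => f (c * x) / f x) atTop (𝓝 (c ^ ρ))

/-- The right tail of `X` is regularly varying with index `α`:
`P(X > x) = L(x) x^{-α}` for a slowly varying `L`. -/
def RegVaryingTail (X : Ω → ℝ) (α : ℝ) : Prop :=
  ∃ L : ℝ → ℝ, SlowlyVarying L ∧ ∀ᶠ x in atTop, tail X x = L x * x ^ (-α)

/-- Tail balance condition with constants `pp > 0`, `pm ≥ 0`, `pp + pm = 1`. -/
structure TailBalance (X : Ω → ℝ) (pp pm : ℝ) : Prop where
  pos : 0 < pp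
  nonneg : 0 ≤ pm
  sum_eq_one : pp + pm = 1
  plus : Tendsto (fun x => tail X x / atail X x) atTop (𝓝 pp)
  minus : Tendsto (fun x => tail (fun ω => -X ω) x / atail X x) atTop (𝓝 pm)

/-- `n`-fold convolution power of a measure on `ℝ` (law of the sum of `n` iid copies). -/
noncomputable def convPow (μ : Measure ℝ) : ℕ → Measure ℝ
  | 0 => Measure.dirac 0
  | n + 1 => Measure.map (fun p : ℝ × ℝ => p.1 + p.2) ((convPow μ n).prod μ)

/-- A distribution concentrated on `[0,∞)` is subexponential:
`P(S_n > x) ∼ n P(X > x)` as `x → ∞` for every `n ≥ 2`. -/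
def SubexponentialMeasure (μ : Measure ℝ) : Prop :=
  μ (Set.Iio 0) = 0 ∧
  ∀ n : ℕ, 2 ≤ n →
    Tendsto (fun x => mtail (convPow μ n) x / mtail μ x) atTop (𝓝 (n : ℝ))

/-- Two-sided subexponential class `𝒮`: the positive part `X⁺` has a subexponential
distribution and the tail balance condition holds. -/
def ClassS (X : Ω → ℝ) (pp pm : ℝ) : Prop :=
  SubexponentialMeasure (Measure.map (fun ω => max (X ω) 0) ℙ) ∧ TailBalance X pp pm

/-- `a` is an auxiliary function for the (tail-) function `T` in the Gumbel MDA sense: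
`T(x + y a(x))/T(x) → e^{-y}`. -/
def IsAuxiliary (T : ℝ → ℝ) (a : ℝ → ℝ) : Prop :=
  (∀ᶠ x in atTop, 0 < a x) ∧
  ∀ y : ℝ, Tendsto (fun x => T (x + y * a x) / T x) atTop (𝓝 (Real.exp (-y)))

/-- `F ∈ MDA(Λ)` (Gumbel maximum domain of attraction, infinite right endpoint),
via the Pickands–Balkema–de Haan characterization. -/
def GumbelMDA (X : Ω → ℝ) : Prop := ∃ a : ℝ → ℝ, IsAuxiliary (tail X) a

/-- Class `LN`: subexponential distributions with `F̄(x) = exp(-S(x))`, `S` slowly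
varying and `S(x)/log x → ∞`. -/
structure ClassLN (X : Ω → ℝ) (S : ℝ → ℝ) (pp pm : ℝ) : Prop where
  classS : ClassS X pp pm
  tail_eq : ∀ᶠ x in atTop, tail X x = Real.exp (-S x)
  slow : SlowlyVarying S
  heavy : Tendsto (fun x => S x / Real.log x) atTop atTop

/-- Strict stationarity of a sequence of random variables. -/
def Stationary (X : ℕ → Ω → ℝ) : Prop :=
  ∀ (k n : ℕ),
    Measure.map (fun ω => fun i : Fin n => X (k + i) ω) ℙ
      = Measure.map (fun ω => fun i : Fin n => X i ω) ℙ

/-- `m`-dependence: the σ-fields generated by `(X_s, s ≤ t)` and `(X_s, s ≥ t+h)`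
are independent whenever `h > m`. -/
def MDep (X : ℕ → Ω → ℝ) (m : ℕ) : Prop :=
  ∀ t h : ℕ, m < h →
    Indep (⨆ s ∈ Set.Iic t, MeasurableSpace.comap (X s) inferInstance)
          (⨆ s ∈ Set.Ici (t + h), MeasurableSpace.comap (X s) inferInstance) ℙ

/-- `sup_{x > u_n} |f_n(x)| → 0` as `n → ∞`. -/
def UnifSmall (u : ℕ → ℝ) (f : ℕ → ℝ → ℝ) : Prop :=
  ∀ ε : ℝ, 0 < ε → ∀ᶠ n in atTop, ∀ x : ℝ, u n < x → |f n x| < ε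

/-- An iid sequence (indexed by `ℕ`). -/
def IID (Z : ℕ → Ω → ℝ) : Prop :=
  iIndepFun Z ℙ ∧
  ∀ j, Measure.map (Z j) ℙ = Measure.map (Z 0) ℙ

/-- An iid sequence indexed by `ℤ`. -/
def IIDZ (Z : ℤ → Ω → ℝ) : Prop :=
  iIndepFun Z ℙ ∧
  ∀ j, Measure.map (Z j) ℙ = Measure.map (Z 0) ℙ

/-- Condition (C) of Mikosch–Rodionov for the sequence `X` with hazard function `S`,
threshold function `g` and separating sequence `t`. -/
structure CondC (X : ℕ → Ω → ℝ) (m : ℕ) (S g : ℝ → ℝ) (t : ℕ → ℝ) : Prop where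
  /- C1 -/
  g_mono : ∃ x₀ : ℝ, MonotoneOn g (Set.Ici x₀)
  g_tendsto : Tendsto g atTop atTop
  g_le : ∃ C : ℝ, 0 < C ∧ ∀ᶠ x in atTop, g x ≤ C * x / S x
  /- C2 -/
  t_tendsto : Tendsto t atTop atTop
  S_unif : ∀ δ : ℝ, 0 < δ →
    UnifSmall (fun n => t n * δ) (fun _ x => S x / S (g x) - 1)
  g_sqrt : Tendsto (fun n => g (t n) / Real.sqrt n) atTop atTop
  iid_ld : ∀ δ : ℝ, 0 < δ → UnifSmall (fun n => t n * δ)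
    (fun n x => mtail (convPow (Measure.map (X 0) ℙ) n) x / (n * tail (X 0) x) - 1)
  /- C3 -/
  mdep : MDep X m
  anti : ∀ ε : ℝ, 0 < ε → ∀ h : ℕ, 1 ≤ h → h ≤ m →
    Tendsto (fun x => pr {ω | ε * g x < |X 0 ω| ∧ ε * x < |X h ω|} / tail (X 0) x)
      atTop (𝓝 0)

/-- Condition (RV) of Mikosch–Rodionov. -/
structure CondRV (X : ℕ → Ω → ℝ) (m : ℕ) (α : ℝ) (pp pm : ℝ) (t : ℕ → ℝ) : Prop where
  /- RV1 -/
  t_growth : Tendsto (fun n : ℕ => t n / Real.sqrt (n * Real.log n)) atTop atTop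
  /- RV2 -/
  alpha_gt_two : 2 < α
  rv : RegVaryingTail (X 0) α
  balance : TailBalance (X 0) pp pm
  /- RV3 -/
  mdep : MDep X m
  anti : ∀ h : ℕ, 1 ≤ h → h ≤ m →
    Tendsto (fun x => pr {ω | x < |X h ω| ∧ x < |X 0 ω|} / atail (X 0) x) atTop (𝓝 0)

/-- A (mean-zero or general) Gaussian process: all finite linear combinations
are one-dimensional Gaussian. -/
def GaussianProcess (Y : ℕ → Ω → ℝ) : Prop :=
  ∀ (s : Finset ℕ) (c : ℕ → ℝ), ∃ (mu : ℝ) (v : ℝ≥0),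
    Measure.map (fun ω => ∑ i ∈ s, c i * Y i ω) ℙ = gaussianReal mu v

/-- Entries of the sample covariance matrix: `S_{ij}^{(n)} = ∑_{t<n} X_{it} X_{jt}`. -/
def sij (X : ℕ → ℕ → Ω → ℝ) (i j n : ℕ) (ω : Ω) : ℝ :=
  ∑ t ∈ Finset.range n, X i t ω * X j t ω

/-- `max_{i ≤ p} (S_{ii}^{(n)} - n e)`. -/
noncomputable def diagMax (X : ℕ → ℕ → Ω → ℝ) (p n : ℕ) (e : ℝ) (ω : Ω) : ℝ :=
  ⨆ i : Fin p, (sij X i i n ω - n * e)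

/-- `max_{1 ≤ i < j ≤ p} |S_{ij}^{(n)} - n e|`. -/
noncomputable def offMaxAbs (X : ℕ → ℕ → Ω → ℝ) (p n : ℕ) (e : ℝ) (ω : Ω) : ℝ :=
  ⨆ q : {q : Fin p × Fin p // q.1 < q.2}, |sij X q.1.1 q.1.2 n ω - n * e|

/-- `max_{1 ≤ i < j ≤ p} (S_{ij}^{(n)} - n e)`. -/
noncomputable def offMax (X : ℕ → ℕ → Ω → ℝ) (p n : ℕ) (e : ℝ) (ω : Ω) : ℝ :=
  ⨆ q : {q : Fin p × Fin p // q.1 < q.2}, (sij X q.1.1 q.1.2 n ω - n * e)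

/-- The rows `(X_{i·})` of the field are iid sequences. -/
def RowsIID (X : ℕ → ℕ → Ω → ℝ) : Prop :=
  iIndepFun
    (fun i ω => fun t => X i t ω) ℙ ∧
  ∀ i, Measure.map (fun ω => fun t => X i t ω) ℙ
      = Measure.map (fun ω => fun t => X 0 t ω) ℙ



set_option linter.unusedSectionVars false
set_option linter.unusedVariables false
set_option maxHeartbeats 1000000

section Basic
variable [IsProbabilityMeasure (ℙ : Measure Ω)]

lemma pr_nonneg (A : Set Ω) : 0 ≤ pr A := ENNReal.toReal_nonneg

lemma pr_mono_ae {A B : Set Ω} (h : A ≤ᵐ[ℙ] B) : pr A ≤ pr B :=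
  ENNReal.toReal_mono (measure_ne_top _ _) (measure_mono_ae h)

lemma pr_le_one (A : Set Ω) : pr A ≤ 1 := by
  have : (ℙ A).toReal ≤ (1 : ℝ≥0∞).toReal :=
    ENNReal.toReal_mono ENNReal.one_ne_top prob_le_one
  simpa [pr] using this

lemma tail_nonneg (X : Ω → ℝ) (x : ℝ) : 0 ≤ tail X x := pr_nonneg _

lemma tail_le_one (X : Ω → ℝ) (x : ℝ) : tail X x ≤ 1 := pr_le_one _

lemma tail_antitone (X : Ω → ℝ) : Antitone (tail X) := fun x y hxy =>
  pr_mono_ae (Filter.Eventually.of_forall fun ω h => lt_of_le_of_lt hxy h)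

end Basic

/-- dyadic bracketing -/
lemma dyadic {r : ℝ} (hr : 1 ≤ r) : ∃ k : ℕ, r ≤ 2 ^ k ∧ (2:ℝ) ^ k ≤ 2 * r := by
  have hex : ∃ k : ℕ, r ≤ (2:ℝ) ^ k := by
    obtain ⟨n, hn⟩ := pow_unbounded_of_one_lt r (one_lt_two (α := ℝ))
    exact ⟨n, hn.le⟩
  classical
  refine ⟨Nat.find hex, Nat.find_spec hex, ?_⟩
  rcases Nat.eq_zero_or_pos (Nat.find hex) with h0 | hpos
  · rw [h0]; norm_num; linarith
  · obtain ⟨m, hm⟩ := Nat.exists_eq_succ_of_ne_zero hpos.ne'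
    have : ¬ (r ≤ (2:ℝ) ^ m) := Nat.find_min hex (by omega)
    push_neg at this
    rw [hm, pow_succ]
    nlinarith

/-- positivity of an antitone nonneg function with nonzero doubling-ratio limit -/
lemma pos_of_ratio {T : ℝ → ℝ} (hnn : ∀ x, 0 ≤ T x) (hanti : Antitone T) {l : ℝ}
    (hl : 0 < l) (h2 : Tendsto (fun x => T (2 * x) / T x) atTop (𝓝 l)) :
    ∀ x, 0 < T x := by
  intro x
  rcases (hnn x).lt_or_eq with h | h
  · exact h
  · exfalso
    have hz : ∀ y, x ≤ y → T y = 0 := fun y hy =>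
      le_antisymm (h ▸ hanti hy) (hnn y)
    have hev : ∀ᶠ y in atTop, T (2 * y) / T y = 0 := by
      filter_upwards [eventually_ge_atTop (max x 0)] with y hy
      have hy1 : x ≤ y := le_trans (le_max_left _ _) hy
      have hy2 : x ≤ 2 * y := by
        have : (0:ℝ) ≤ y := le_trans (le_max_right _ _) hy
        nlinarith
      rw [hz _ hy1, hz _ hy2, div_zero]
    have : Tendsto (fun y => T (2 * y) / T y) atTop (𝓝 0) :=
      Tendsto.congr' (hev.mono fun y hy => hy.symm) tendsto_const_nhds
    exact hl.ne' (tendsto_nhds_unique h2 this)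


/-- lemma converting tendsto ratio into eventual halving bound -/
lemma halving {T : ℝ → ℝ} {ρ ε : ℝ} (hpos : ∀ x, 0 < T x) (hε : 0 < ε)
    (h2 : Tendsto (fun x => T (2 * x) / T x) atTop (𝓝 ((2:ℝ) ^ (-ρ)))) :
    ∃ x₁ : ℝ, 1 ≤ x₁ ∧ ∀ z, x₁ ≤ z → T z ≤ (2:ℝ) ^ (ρ + ε) * T (2 * z) := by
  have hlt : (2:ℝ) ^ (-(ρ + ε)) < (2:ℝ) ^ (-ρ) := by
    apply Real.rpow_lt_rpow_left_iff (x := (2:ℝ)) one_lt_two |>.mpr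
    linarith
  have hev : ∀ᶠ x in atTop, (2:ℝ) ^ (-(ρ + ε)) < T (2 * x) / T x :=
    h2.eventually (eventually_gt_nhds hlt)
  obtain ⟨x₀, hx₀⟩ := (hev.and (eventually_ge_atTop 1)).exists_forall_of_atTop
  refine ⟨max x₀ 1, le_max_right _ _, fun z hz => ?_⟩
  obtain ⟨h1, h2'⟩ := hx₀ z (le_trans (le_max_left _ _) hz)
  have hTz := hpos z
  have h3 : (2:ℝ) ^ (-(ρ + ε)) * T z < T (2 * z) := by
    rw [div_eq_mul_inv] at h1
    calc (2:ℝ) ^ (-(ρ + ε)) * T z < T (2 * z) * (T z)⁻¹ * T z :=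
        mul_lt_mul_of_pos_right h1 hTz
      _ = T (2 * z) := by field_simp
  have hid : (2:ℝ) ^ (ρ + ε) * (2:ℝ) ^ (-(ρ + ε)) = 1 := by
    have hz0 : ρ + ε + -(ρ + ε) = 0 := by ring
    rw [← Real.rpow_add two_pos, hz0, Real.rpow_zero]
  calc T z = (2:ℝ) ^ (ρ + ε) * ((2:ℝ) ^ (-(ρ + ε)) * T z) := by
        rw [← mul_assoc, hid, one_mul]
    _ ≤ (2:ℝ) ^ (ρ + ε) * T (2 * z) :=
        mul_le_mul_of_nonneg_left h3.le (Real.rpow_pos_of_pos two_pos _).le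

/-- doubling chain -/
lemma chainUp {T : ℝ → ℝ} {K x₁ : ℝ} (hx₁ : 1 ≤ x₁)
    (H : ∀ z, x₁ ≤ z → T z ≤ K * T (2 * z)) (hK : 0 ≤ K) :
    ∀ k : ℕ, ∀ z, x₁ ≤ z → T z ≤ K ^ k * T (2 ^ k * z) := by
  intro k
  induction k with
  | zero => intro z hz; simp
  | succ n ih =>
    intro z hz
    have hz0 : (0:ℝ) < z := lt_of_lt_of_le (by linarith) hz
    calc T z ≤ K * T (2 * z) := H z hz
      _ ≤ K * (K ^ n * T (2 ^ n * (2 * z))) := by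
          have := ih (2 * z) (by nlinarith)
          exact mul_le_mul_of_nonneg_left this hK
      _ = K ^ (n+1) * T (2 ^ (n+1) * z) := by ring_nf
  
/-- lower Potter bound -/
lemma potter_lower {T : ℝ → ℝ} {x₁ ρ ε : ℝ} (hx₁ : 1 ≤ x₁)
    (hpos : ∀ x, 0 < T x) (hanti : Antitone T) (hρε : 0 < ρ + ε)
    (H : ∀ z, x₁ ≤ z → T z ≤ (2:ℝ) ^ (ρ + ε) * T (2 * z)) :
    ∃ c : ℝ, 0 < c ∧ ∀ x, x₁ ≤ x → c * x ^ (-(ρ + ε)) ≤ T x := by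
  set K : ℝ := (2:ℝ) ^ (ρ + ε) with hKdef
  have hK0 : 0 < K := Real.rpow_pos_of_pos two_pos _
  have hx₁0' : (0:ℝ) < x₁ := by linarith
  refine ⟨T x₁ * (2 / x₁) ^ (-(ρ + ε)),
    mul_pos (hpos x₁) (Real.rpow_pos_of_pos (by positivity) _), fun x hx => ?_⟩
  have hx0 : (0:ℝ) < x := lt_of_lt_of_le (by linarith) hx
  have hx₁0 : (0:ℝ) < x₁ := by linarith
  obtain ⟨k, hk1, hk2⟩ := dyadic (le_div_iff₀ hx₁0 |>.mpr (by linarith) : 1 ≤ x / x₁)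
  -- x ≤ 2^k * x₁, and 2^k ≤ 2x/x₁
  have hkx : x ≤ 2 ^ k * x₁ := by
    rw [div_le_iff₀ hx₁0] at hk1; linarith
  have hchain := chainUp hx₁ H hK0.le k x₁ le_rfl
  have h1 : T x₁ ≤ K ^ k * T x := by
    calc T x₁ ≤ K ^ k * T (2 ^ k * x₁) := hchain
      _ ≤ K ^ k * T x := mul_le_mul_of_nonneg_left (hanti hkx) (by positivity)
  -- K^k = (2^k)^(ρ+ε) ≤ (2x/x₁)^(ρ+ε)
  have hKk : K ^ k = ((2:ℝ) ^ k) ^ (ρ + ε) := by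
    rw [hKdef, ← Real.rpow_natCast ((2:ℝ) ^ (ρ+ε)) k, ← Real.rpow_natCast (2:ℝ) k,
      ← Real.rpow_mul (by norm_num), ← Real.rpow_mul (by norm_num), mul_comm]
  have hKk2 : K ^ k ≤ (2 * x / x₁) ^ (ρ + ε) := by
    rw [hKk]
    apply Real.rpow_le_rpow (by positivity) _ hρε.le
    calc ((2:ℝ))^k ≤ 2 * (x / x₁) := hk2
      _ = 2 * x / x₁ := by ring
  have hTx : 0 < T x := hpos x
  have h2 : T x₁ ≤ (2 * x / x₁) ^ (ρ + ε) * T x :=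
    h1.trans (mul_le_mul_of_nonneg_right hKk2 hTx.le)
  have heq : (2 * x / x₁) ^ (ρ + ε) = ((2 / x₁) ^ (-(ρ+ε)))⁻¹ * (x ^ (-(ρ+ε)))⁻¹ := by
    rw [Real.rpow_neg (by positivity), Real.rpow_neg hx0.le, inv_inv, inv_inv,
      ← Real.mul_rpow (by positivity) hx0.le]
    ring_nf
  rw [heq] at h2
  have hp1 : (0:ℝ) < (2 / x₁) ^ (-(ρ+ε)) := Real.rpow_pos_of_pos (by positivity) _
  have hp2 : (0:ℝ) < x ^ (-(ρ+ε)) := Real.rpow_pos_of_pos hx0 _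
  calc T x₁ * (2 / x₁) ^ (-(ρ + ε)) * x ^ (-(ρ+ε))
      ≤ (((2 / x₁) ^ (-(ρ+ε)))⁻¹ * (x ^ (-(ρ+ε)))⁻¹ * T x) * (2 / x₁) ^ (-(ρ + ε)) * x ^ (-(ρ+ε)) := by
        have := mul_le_mul_of_nonneg_right (mul_le_mul_of_nonneg_right h2 hp1.le) hp2.le
        convert this using 2 <;> ring
    _ = T x := by field_simp
  
/-- upper Potter bound -/
lemma potter_upper {T : ℝ → ℝ} {x₁ ρ ε : ℝ} (hx₁ : 1 ≤ x₁)
    (hpos : ∀ x, 0 < T x) (hanti : Antitone T) (hρε : 0 < ρ + ε)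
    (H : ∀ z, x₁ ≤ z → T z ≤ (2:ℝ) ^ (ρ + ε) * T (2 * z)) :
    ∀ u x : ℝ, 1 ≤ u → 2 * u * x₁ ≤ x →
      T (x / u) ≤ (2:ℝ) ^ (ρ + ε) * u ^ (ρ + ε) * T x := by
  intro u x hu hx
  set K : ℝ := (2:ℝ) ^ (ρ + ε) with hKdef
  have hK0 : 0 < K := Real.rpow_pos_of_pos two_pos _
  have hu0 : (0:ℝ) < u := by linarith
  have hx0 : (0:ℝ) < x := by nlinarith
  obtain ⟨k, hk1, hk2⟩ := dyadic hu
  have hz : x₁ ≤ x / 2 ^ k := by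
    rw [le_div_iff₀ (by positivity)]
    calc x₁ * 2 ^ k ≤ x₁ * (2 * u) := by
          exact mul_le_mul_of_nonneg_left hk2 (by linarith)
      _ ≤ x := by nlinarith
  have h1 : T (x / u) ≤ T (x / 2 ^ k) := by
    apply hanti
    exact div_le_div_of_nonneg_left hx0.le hu0 hk1
  have h2 : T (x / 2 ^ k) ≤ K ^ k * T x := by
    have := chainUp hx₁ H hK0.le k (x / 2 ^ k) hz
    have hxx : (2:ℝ) ^ k * (x / 2 ^ k) = x := by field_simp
    rwa [hxx] at this
  have hKk : K ^ k = ((2:ℝ) ^ k) ^ (ρ + ε) := by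
    rw [hKdef, ← Real.rpow_natCast ((2:ℝ) ^ (ρ+ε)) k, ← Real.rpow_natCast (2:ℝ) k,
      ← Real.rpow_mul (by norm_num), ← Real.rpow_mul (by norm_num), mul_comm]
  have hKk2 : K ^ k ≤ K * u ^ (ρ + ε) := by
    rw [hKk, hKdef, ← Real.mul_rpow (by norm_num) hu0.le]
    exact Real.rpow_le_rpow (by positivity) hk2 hρε.le
  calc T (x / u) ≤ K ^ k * T x := h1.trans h2
    _ ≤ K * u ^ (ρ + ε) * T x := mul_le_mul_of_nonneg_right hKk2 (hpos x).le


/-- Potter-type domination bound -/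
lemma potter_dom {T : ℝ → ℝ} {x₁ ρ ε : ℝ} (hx₁ : 1 ≤ x₁)
    (hpos : ∀ x, 0 < T x) (hanti : Antitone T) (hle1 : ∀ x, T x ≤ 1) (hρε : 0 < ρ + ε)
    (H : ∀ z, x₁ ≤ z → T z ≤ (2:ℝ) ^ (ρ + ε) * T (2 * z)) :
    ∃ C x₂ : ℝ, 0 < C ∧ 1 ≤ x₂ ∧ ∀ x, x₂ ≤ x → ∀ u, 0 < u →
      T (x / u) / T x ≤ C * (1 + u ^ (ρ + ε)) := by
  obtain ⟨c, hc, hlow⟩ := potter_lower hx₁ hpos hanti hρε H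
  have hK1 : (1:ℝ) ≤ (2:ℝ) ^ (ρ + ε) := Real.one_le_rpow one_le_two hρε.le
  refine ⟨max ((2:ℝ) ^ (ρ + ε)) ((2 * x₁) ^ (ρ + ε) / c), 2 * x₁,
    lt_of_lt_of_le one_pos (le_trans hK1 (le_max_left _ _)), by linarith, ?_⟩
  intro x hx u hu
  set C : ℝ := max ((2:ℝ) ^ (ρ + ε)) ((2 * x₁) ^ (ρ + ε) / c) with hCdef
  have hC1 : (1:ℝ) ≤ C := le_trans hK1 (le_max_left _ _)
  have hx0 : (0:ℝ) < x := by nlinarith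
  have hTx := hpos x
  have hup0 : (0:ℝ) ≤ u ^ (ρ + ε) := (Real.rpow_pos_of_pos hu _).le
  rcases le_or_gt u 1 with h1 | h1
  · have hxu : x ≤ x / u := by
      rw [le_div_iff₀ hu]; nlinarith
    have : T (x / u) / T x ≤ 1 := by
      rw [div_le_one hTx]; exact hanti hxu
    nlinarith
  · rcases le_or_gt (2 * u * x₁) x with h2 | h2
    · have := potter_upper hx₁ hpos hanti hρε H u x h1.le h2
      have h3 : T (x / u) / T x ≤ (2:ℝ) ^ (ρ + ε) * u ^ (ρ + ε) := by
        rw [div_le_iff₀ hTx]; exact this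
      have h4 : (2:ℝ) ^ (ρ + ε) ≤ C := le_max_left _ _
      nlinarith
    · have hxx₁ : x₁ ≤ x := by linarith
      have hlow' := hlow x hxx₁
      have hxp : (0:ℝ) < x ^ (ρ + ε) := Real.rpow_pos_of_pos hx0 _
      have hxnegp : x ^ (-(ρ + ε)) = (x ^ (ρ + ε))⁻¹ := by
        rw [Real.rpow_neg hx0.le]
      have h3 : T (x / u) / T x ≤ x ^ (ρ + ε) / c := by
        have hTxlow : c * (x ^ (ρ + ε))⁻¹ ≤ T x := by rwa [hxnegp] at hlow'
        have h5 : T (x / u) ≤ 1 := hle1 _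
        rw [div_le_div_iff₀ hTx (by positivity)]
        calc T (x / u) * c ≤ 1 * c := by nlinarith
          _ = c := one_mul c
          _ = (c * (x ^ (ρ + ε))⁻¹) * x ^ (ρ + ε) := by field_simp
          _ ≤ T x * x ^ (ρ + ε) := mul_le_mul_of_nonneg_right hTxlow hxp.le
          _ = x ^ (ρ + ε) * T x := by ring
      have h6 : x ^ (ρ + ε) ≤ (2 * x₁) ^ (ρ + ε) * u ^ (ρ + ε) := by
        rw [← Real.mul_rpow (by positivity) hu.le]
        apply Real.rpow_le_rpow hx0.le _ hρε.le
        nlinarith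
      have h7 : (2 * x₁) ^ (ρ + ε) / c ≤ C := le_max_right _ _
      have h8 : T (x / u) / T x ≤ ((2 * x₁) ^ (ρ + ε) / c) * u ^ (ρ + ε) := by
        calc T (x / u) / T x ≤ x ^ (ρ + ε) / c := h3
          _ ≤ ((2 * x₁) ^ (ρ + ε) * u ^ (ρ + ε)) / c := by gcongr
          _ = ((2 * x₁) ^ (ρ + ε) / c) * u ^ (ρ + ε) := by ring
      nlinarith

/-- ratio convergence from regularly varying tail -/
lemma rv_ratio {X : Ω → ℝ} {α : ℝ} (h : RegVaryingTail X α) {c : ℝ} (hc : 0 < c) :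
    Tendsto (fun x => tail X (c * x) / tail X x) atTop (𝓝 (c ^ (-α))) := by
  obtain ⟨L, hL, hev⟩ := h
  have hcx : Tendsto (fun x : ℝ => c * x) atTop atTop :=
    Tendsto.const_mul_atTop hc tendsto_id
  have hev2 : ∀ᶠ x in atTop, tail X (c * x) = L (c * x) * (c * x) ^ (-α) :=
    hcx.eventually hev
  have key : ∀ᶠ x in atTop,
      (L (c * x) / L x) * c ^ (-α) = tail X (c * x) / tail X x := by
    filter_upwards [hev, hev2, eventually_gt_atTop 0] with x h1 h2 hx
    rw [h1, h2, Real.mul_rpow hc.le hx.le]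
    have hxne : x ^ (-α) ≠ 0 := (Real.rpow_pos_of_pos hx _).ne'
    rw [show L (c * x) * (c ^ (-α) * x ^ (-α)) = (L (c * x) * c ^ (-α)) * x ^ (-α) by ring,
      mul_div_mul_right _ _ hxne, mul_div_right_comm]
  have := (hL c hc).mul_const (c ^ (-α))
  rw [one_mul] at this
  exact Tendsto.congr' key this

section Breiman
variable [IsProbabilityMeasure (ℙ : Measure Ω)]

lemma integral_rpow_pos {η : Ω → ℝ} (hηm : Measurable η) (hη : ∀ᵐ ω ∂ℙ, 0 < η ω)
    {p q : ℝ} (hp : 0 ≤ p) (hpq : p ≤ q)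
    (hmom : Integrable (fun ω => η ω ^ q)) :
    Integrable (fun ω => η ω ^ p) ∧ 0 < ∫ ω, η ω ^ p := by
  have hmeasp : Measurable fun ω => η ω ^ p :=
    (Real.continuous_rpow_const hp).measurable.comp hηm
  have hint : Integrable (fun ω => η ω ^ p) := by
    apply Integrable.mono' ((integrable_const (1:ℝ)).add hmom) hmeasp.aestronglyMeasurable
    filter_upwards [hη] with ω hω
    rw [Real.norm_eq_abs, abs_of_nonneg (Real.rpow_nonneg hω.le _)]
    rcases le_or_gt (η ω) 1 with h | h
    · have h1 : η ω ^ p ≤ 1 := Real.rpow_le_one hω.le h hp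
      have h2 : (0:ℝ) ≤ η ω ^ (q) := Real.rpow_nonneg hω.le _
      simp only [Pi.add_apply, Pi.one_apply]; linarith
    · have h1 : η ω ^ p ≤ η ω ^ q := Real.rpow_le_rpow_of_exponent_le h.le hpq
      have h2 : (0:ℝ) ≤ (1:ℝ) := zero_le_one
      simp only [Pi.add_apply, Pi.one_apply]; linarith
  refine ⟨hint, ?_⟩
  have haeq : (fun ω => |η ω| ^ p) =ᵐ[ℙ] fun ω => η ω ^ p :=
    hη.mono fun ω hω => by show |η ω| ^ p = η ω ^ p; rw [abs_of_pos hω]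
  have hintg : Integrable (fun ω => |η ω| ^ p) := hint.congr haeq.symm
  rw [← integral_congr_ae haeq]
  rw [integral_pos_iff_support_of_nonneg
    (fun ω => Real.rpow_nonneg (abs_nonneg _) _) hintg]
  have hsub : ∀ᵐ ω ∂ℙ, ω ∈ Function.support fun ω => |η ω| ^ p :=
    hη.mono fun ω hω => by
      simp only [Function.mem_support]
      exact (Real.rpow_pos_of_pos (abs_pos.mpr hω.ne') _).ne'
  calc (0:ℝ≥0∞) < 1 := by norm_num
    _ = ℙ Set.univ := measure_univ.symm
    _ ≤ ℙ (Function.support fun ω => |η ω| ^ p) :=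
        measure_mono_ae (hsub.mono fun ω hω _ => hω)

/-- Breiman's lemma -/
lemma breiman {η ξ : Ω → ℝ} (hηm : Measurable η) (hξm : Measurable ξ)
    (hind : IndepFun η ξ ℙ) (hη : ∀ᵐ ω ∂ℙ, 0 < η ω)
    {ρ δ : ℝ} (hρ : 0 < ρ) (hδ : 0 < δ)
    (hmom : Integrable (fun ω => η ω ^ (ρ + δ)))
    (hrv : ∀ c : ℝ, 0 < c → Tendsto (fun x => tail ξ (c * x) / tail ξ x) atTop
      (𝓝 (c ^ (-ρ)))) :
    Tendsto (fun x => pr {ω | x < η ω * ξ ω} / ((∫ ω, η ω ^ ρ) * tail ξ x))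
      atTop (𝓝 1) := by
  set T : ℝ → ℝ := tail ξ with hTdef
  have hTnn : ∀ x, 0 ≤ T x := tail_nonneg ξ
  have hTanti : Antitone T := tail_antitone ξ
  have hT1 : ∀ x, T x ≤ 1 := tail_le_one ξ
  have hTpos : ∀ x, 0 < T x :=
    pos_of_ratio hTnn hTanti (Real.rpow_pos_of_pos two_pos (-ρ)) (hrv 2 two_pos)
  set μ : Measure ℝ := Measure.map η ℙ with hμdef
  set ν : Measure ℝ := Measure.map ξ ℙ with hνdef
  have hμprob : IsProbabilityMeasure μ := Measure.isProbabilityMeasure_map hηm.aemeasurable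
  have hνprob : IsProbabilityMeasure ν := Measure.isProbabilityMeasure_map hξm.aemeasurable
  have hTmap : ∀ z, T z = (ν (Ioi z)).toReal := by
    intro z
    rw [hTdef, hνdef, tail, pr, Measure.map_apply hξm measurableSet_Ioi]
    rfl
  have hμpos : ∀ᵐ u ∂μ, 0 < u := by
    rw [hμdef, ae_map_iff hηm.aemeasurable (measurableSet_Ioi (a := (0:ℝ)))]
    exact hη
  have hνIoi_meas : Measurable fun z : ℝ => ν (Ioi z) := by
    have hmono : Antitone fun z : ℝ => ν (Ioi z) :=
      fun a b hab => measure_mono (Ioi_subset_Ioi hab)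
    exact hmono.measurable
  have hTmeas : Measurable T := by
    have : T = fun z => (ν (Ioi z)).toReal := funext hTmap
    rw [this]
    exact ENNReal.measurable_toReal.comp hνIoi_meas
  have key : ∀ x : ℝ, 0 < x → pr {ω | x < η ω * ξ ω} = ∫ u, T (x / u) ∂μ := by
    intro x hx
    have hA : MeasurableSet {p : ℝ × ℝ | x < p.1 * p.2} :=
      measurableSet_lt measurable_const (measurable_fst.mul measurable_snd)
    have hmapprod : Measure.map (fun ω => (η ω, ξ ω)) ℙ = μ.prod ν :=
      (indepFun_iff_map_prod_eq_prod_map_map hηm.aemeasurable hξm.aemeasurable).mp hind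
    have h1 : ℙ {ω | x < η ω * ξ ω} = (μ.prod ν) {p : ℝ × ℝ | x < p.1 * p.2} := by
      rw [← hmapprod, Measure.map_apply (hηm.prodMk hξm) hA]
      rfl
    rw [Measure.prod_apply hA] at h1
    have h2 : ∀ᵐ u ∂μ, ν (Prod.mk u ⁻¹' {p : ℝ × ℝ | x < p.1 * p.2}) = ν (Ioi (x / u)) := by
      filter_upwards [hμpos] with u hu
      congr 1
      ext v
      simp only [mem_preimage, mem_setOf_eq, mem_Ioi]
      rw [div_lt_iff₀ hu, mul_comm]
    rw [lintegral_congr_ae h2] at h1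
    have hmeas' : AEMeasurable (fun u : ℝ => ν (Ioi (x / u))) μ :=
      (hνIoi_meas.comp (measurable_const.div measurable_id)).aemeasurable
    rw [pr, h1, ← integral_toReal hmeas' (Eventually.of_forall fun u => measure_lt_top ν _)]
    exact integral_congr_ae (Eventually.of_forall fun u => by show (ν (Ioi (x / u))).toReal = T (x / u); rw [hTmap])
  have hmomμ : Integrable (fun u : ℝ => u ^ (ρ + δ)) μ := by
    rw [hμdef, integrable_map_measure
      (Real.continuous_rpow_const (by linarith)).measurable.aestronglyMeasurable
      hηm.aemeasurable]
    exact hmom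
  obtain ⟨x₁, hx₁, H⟩ := halving hTpos hδ (hrv 2 two_pos)
  obtain ⟨C, x₂, hC, hx₂, hdom⟩ :=
    potter_dom hx₁ hTpos hTanti hT1 (by linarith : 0 < ρ + δ) H
  have hbound_int : Integrable (fun u : ℝ => C * (1 + u ^ (ρ + δ))) μ :=
    ((integrable_const (1:ℝ)).add hmomμ).const_mul C
  have hDCT : Tendsto (fun x => ∫ u, T (x / u) / T x ∂μ) atTop (𝓝 (∫ u, u ^ ρ ∂μ)) := by
    apply tendsto_integral_filter_of_dominated_convergence (fun u => C * (1 + u ^ (ρ + δ)))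
    · apply Eventually.of_forall
      intro x
      exact ((hTmeas.comp (measurable_const.div measurable_id)).div_const _).aestronglyMeasurable
    · filter_upwards [eventually_ge_atTop x₂] with x hx
      filter_upwards [hμpos] with u hu
      rw [Real.norm_eq_abs, abs_of_nonneg (div_nonneg (hTnn _) (hTnn _))]
      exact hdom x hx u hu
    · exact hbound_int
    · filter_upwards [hμpos] with u hu
      have h := hrv u⁻¹ (inv_pos.mpr hu)
      have hlim : (u⁻¹ : ℝ) ^ (-ρ) = u ^ ρ := by
        rw [Real.inv_rpow hu.le, Real.rpow_neg hu.le, inv_inv]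
      rw [hlim] at h
      exact h.congr fun x => by rw [show u⁻¹ * x = x / u from (div_eq_inv_mul x u).symm]
  have hintμ : ∫ u, u ^ ρ ∂μ = ∫ ω, η ω ^ ρ := by
    rw [hμdef, integral_map hηm.aemeasurable
      (Real.continuous_rpow_const hρ.le).measurable.aestronglyMeasurable]
  obtain ⟨hintρ, hposρ⟩ := integral_rpow_pos hηm hη hρ.le (by linarith : ρ ≤ ρ + δ) hmom
  have hfinal := hDCT.div_const (∫ ω, η ω ^ ρ)
  rw [hintμ, div_self hposρ.ne'] at hfinal
  apply hfinal.congr'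
  filter_upwards [eventually_gt_atTop 0] with x hx
  rw [integral_div, ← key x hx, div_div, mul_comm (T x) (∫ ω, η ω ^ ρ)]

end Breiman

/-- **Example 2.7** (stochastic volatility, regularly varying case).
For `X_t = σ_t Z_t` with positive stationary `(σ_t)` independent of the iid
sequence `(Z_t)`, `|Z|` regularly varying with index `α > 0`, and
`E[σ^{2α+δ}] < ∞`: for every `h ≥ 1`,
`P(|X_h|>x, |X_0|>x) ≤ P((σ_h ∨ σ_0)(|Z_0| ∧ |Z_h|) > x)
  ∼ E[(σ_h ∨ σ_0)^{2α}] (P(|Z|>x))²`,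
`P(|X|>x) ∼ E[σ^α] P(|Z|>x)` (Breiman), and hence
`P(|X_h|>x | |X_0|>x) → 0` (condition RV3; asymptotic independence). -/
theorem statement15
    {Ω : Type*} [MeasureSpace Ω] [IsProbabilityMeasure (ℙ : Measure Ω)]
    (σv : ℕ → Ω → ℝ) (Z : ℕ → Ω → ℝ)
    (hσmeas : ∀ i, Measurable (σv i)) (hZmeas : ∀ i, Measurable (Z i))
    (hσpos : ∀ᵐ ω ∂ℙ, ∀ i, 0 < σv i ω)
    (hσstat : Stationary σv)
    (hZiid : IID Z)
    (hindep : IndepFun (fun ω => fun i => σv i ω) (fun ω => fun i => Z i ω) ℙ)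
    (α : ℝ) (hα : 0 < α)
    (hZrv : RegVaryingTail (fun ω => |Z 0 ω|) α)
    (δ : ℝ) (hδ : 0 < δ)
    (hmom : Integrable (fun ω => σv 0 ω ^ (2 * α + δ)))
    (X : ℕ → Ω → ℝ) (hX : ∀ t ω, X t ω = σv t ω * Z t ω) :
    ∀ h : ℕ, 1 ≤ h →
      -- the pointwise domination
      (∀ x : ℝ, pr {ω | x < |X h ω| ∧ x < |X 0 ω|}
          ≤ pr {ω | x < max (σv h ω) (σv 0 ω) * min |Z 0 ω| |Z h ω|}) ∧
      -- Breiman's lemma for the dominating product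
      Tendsto (fun x =>
          pr {ω | x < max (σv h ω) (σv 0 ω) * min |Z 0 ω| |Z h ω|}
            / ((∫ ω, max (σv h ω) (σv 0 ω) ^ (2 * α)) * (atail (Z 0) x) ^ 2))
        atTop (𝓝 1) ∧
      -- Breiman's lemma for the marginal tail
      Tendsto (fun x => atail (X 0) x / ((∫ ω, σv 0 ω ^ α) * atail (Z 0) x))
        atTop (𝓝 1) ∧
      -- condition RV3 / asymptotic independence
      Tendsto (fun x =>
          pr {ω | x < |X h ω| ∧ x < |X 0 ω|} / atail (X 0) x) atTop (𝓝 0) := by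
  intro h hh
  -- notation
  have habs : atail (Z 0) = tail (fun ω => |Z 0 ω|) := rfl
  have hrvT : ∀ c : ℝ, 0 < c →
      Tendsto (fun x => atail (Z 0) (c * x) / atail (Z 0) x) atTop (𝓝 (c ^ (-α))) :=
    fun c hc => rv_ratio hZrv hc
  have hTnn : ∀ x, 0 ≤ atail (Z 0) x := fun x => pr_nonneg _
  have hTanti : Antitone (atail (Z 0)) := tail_antitone (fun ω => |Z 0 ω|)
  have hTpos : ∀ x, 0 < atail (Z 0) x :=
    pos_of_ratio hTnn hTanti (Real.rpow_pos_of_pos two_pos (-α)) (hrvT 2 two_pos)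
  -- measurability
  have hWmeas : Measurable fun ω => max (σv h ω) (σv 0 ω) := (hσmeas h).max (hσmeas 0)
  have hMmeas : Measurable fun ω => min |Z 0 ω| |Z h ω| :=
    ((hZmeas 0).abs.min (hZmeas h).abs)
  -- positivity
  have hWpos : ∀ᵐ ω ∂ℙ, 0 < max (σv h ω) (σv 0 ω) :=
    hσpos.mono fun ω hω => lt_of_lt_of_le (hω h) (le_max_left _ _)
  have hσ0pos : ∀ᵐ ω ∂ℙ, 0 < σv 0 ω := hσpos.mono fun ω hω => hω 0
  -- law of σv h equals law of σv 0
  have hσlaw : Measure.map (σv h) ℙ = Measure.map (σv 0) ℙ := by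
    have hst := hσstat h 1
    have hF : Measurable fun ω => fun i : Fin 1 => σv (h + i) ω :=
      measurable_pi_lambda _ fun i => hσmeas _
    have hG : Measurable fun ω => fun i : Fin 1 => σv (i : ℕ) ω :=
      measurable_pi_lambda _ fun i => hσmeas _
    have hι : Measurable fun f : Fin 1 → ℝ => f 0 := measurable_pi_apply 0
    have hcomp := congrArg (Measure.map (fun f : Fin 1 → ℝ => f 0)) hst
    rw [Measure.map_map hι hF, Measure.map_map hι hG] at hcomp
    simpa [Function.comp_def] using hcomp
  -- moment for σv h, and for the max
  have hp0 : (0:ℝ) ≤ 2 * α + δ := by linarith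
  have hrpmeas : Measurable fun u : ℝ => u ^ (2 * α + δ) :=
    (Real.continuous_rpow_const hp0).measurable
  have hmomh : Integrable (fun ω => σv h ω ^ (2 * α + δ)) := by
    have e1 : Integrable (fun u : ℝ => u ^ (2 * α + δ)) (Measure.map (σv h) ℙ) := by
      rw [hσlaw,
        integrable_map_measure hrpmeas.aestronglyMeasurable (hσmeas 0).aemeasurable]
      exact hmom
    rwa [integrable_map_measure hrpmeas.aestronglyMeasurable (hσmeas h).aemeasurable] at e1
  have hmomW : Integrable (fun ω => max (σv h ω) (σv 0 ω) ^ (2 * α + δ)) := by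
    apply Integrable.mono' (hmomh.add hmom)
      ((((Real.continuous_rpow_const hp0).measurable.comp hWmeas) :
        Measurable fun ω => max (σv h ω) (σv 0 ω) ^ (2 * α + δ)).aestronglyMeasurable)
    filter_upwards [hσpos] with ω hω
    show |max (σv h ω) (σv 0 ω) ^ (2 * α + δ)|
      ≤ σv h ω ^ (2 * α + δ) + σv 0 ω ^ (2 * α + δ)
    have h0h : (0:ℝ) < σv h ω := hω h
    have h00 : (0:ℝ) < σv 0 ω := hω 0
    rw [abs_of_nonneg (Real.rpow_nonneg (le_max_of_le_left h0h.le) _)]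
    rcases max_cases (σv h ω) (σv 0 ω) with ⟨he, _⟩ | ⟨he, _⟩ <;> rw [he]
    · have : (0:ℝ) ≤ σv 0 ω ^ (2 * α + δ) := Real.rpow_nonneg h00.le _
      linarith
    · have : (0:ℝ) ≤ σv h ω ^ (2 * α + δ) := Real.rpow_nonneg h0h.le _
      linarith
  -- independence
  have hindWM : IndepFun (fun ω => max (σv h ω) (σv 0 ω)) (fun ω => min |Z 0 ω| |Z h ω|) ℙ :=
    hindep.comp ((measurable_pi_apply h).max (measurable_pi_apply 0))
      (((measurable_pi_apply 0).abs).min ((measurable_pi_apply h).abs))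
  have hindσZ : IndepFun (σv 0) (fun ω => |Z 0 ω|) ℙ :=
    hindep.comp (measurable_pi_apply 0) ((measurable_pi_apply 0).abs)
  -- the tail of the min is the square of the tail
  have hZind : IndepFun (fun ω => |Z 0 ω|) (fun ω => |Z h ω|) ℙ :=
    (hZiid.1.indepFun (show (0:ℕ) ≠ h by omega)).comp measurable_abs measurable_abs
  have hlawZ : ∀ x : ℝ, ℙ {ω | x < |Z h ω|} = ℙ {ω | x < |Z 0 ω|} := by
    intro x
    have hs : MeasurableSet {v : ℝ | x < |v|} := measurableSet_lt measurable_const measurable_abs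
    have h1 : ℙ {ω | x < |Z h ω|} = (Measure.map (Z h) ℙ) {v : ℝ | x < |v|} := by
      rw [Measure.map_apply (hZmeas h) hs]; rfl
    have h2 : ℙ {ω | x < |Z 0 ω|} = (Measure.map (Z 0) ℙ) {v : ℝ | x < |v|} := by
      rw [Measure.map_apply (hZmeas 0) hs]; rfl
    rw [h1, h2, hZiid.2 h]
  have htailM : ∀ x : ℝ, tail (fun ω => min |Z 0 ω| |Z h ω|) x = (atail (Z 0) x) ^ 2 := by
    intro x
    have hseteq : {ω | x < min |Z 0 ω| |Z h ω|}
        = (fun ω => |Z 0 ω|) ⁻¹' (Ioi x) ∩ (fun ω => |Z h ω|) ⁻¹' (Ioi x) := by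
      ext ω; simp [lt_min_iff]
    have hmul := (indepFun_iff_measure_inter_preimage_eq_mul.mp hZind) (Ioi x) (Ioi x)
      measurableSet_Ioi measurableSet_Ioi
    rw [tail, pr, hseteq, hmul, ENNReal.toReal_mul]
    have : ℙ ((fun ω => |Z h ω|) ⁻¹' Ioi x) = ℙ ((fun ω => |Z 0 ω|) ⁻¹' Ioi x) := hlawZ x
    rw [this, atail, pr, sq]
    rfl
  -- regular variation for the tail of the min, with index 2α
  have hrvM : ∀ c : ℝ, 0 < c →
      Tendsto (fun x => tail (fun ω => min |Z 0 ω| |Z h ω|) (c * x)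
        / tail (fun ω => min |Z 0 ω| |Z h ω|) x) atTop (𝓝 (c ^ (-(2 * α)))) := by
    intro c hc
    have hexp : c ^ (-(2 * α)) = (c ^ (-α)) ^ 2 := by
      rw [show (-(2 * α)) = (-α) * 2 by ring, Real.rpow_mul hc.le,
        show ((2:ℝ)) = ((2:ℕ):ℝ) by norm_num, Real.rpow_natCast]
    have h2 := (hrvT c hc).pow 2
    rw [← hexp] at h2
    apply h2.congr
    intro x
    rw [div_pow, htailM, htailM]
  -- Breiman for the dominating product (goal 2)
  have hB2 : Tendsto (fun x =>
      pr {ω | x < max (σv h ω) (σv 0 ω) * min |Z 0 ω| |Z h ω|}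
        / ((∫ ω, max (σv h ω) (σv 0 ω) ^ (2 * α)) * (atail (Z 0) x) ^ 2))
      atTop (𝓝 1) := by
    have hmomW' : Integrable (fun ω => max (σv h ω) (σv 0 ω) ^ (2 * α + δ)) := hmomW
    have := breiman hWmeas hMmeas hindWM hWpos (by linarith : (0:ℝ) < 2 * α) hδ hmomW' hrvM
    have heq : (fun x => pr {ω | x < max (σv h ω) (σv 0 ω) * min |Z 0 ω| |Z h ω|}
        / ((∫ ω, max (σv h ω) (σv 0 ω) ^ (2 * α)) * tail (fun ω => min |Z 0 ω| |Z h ω|) x))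
        = fun x => pr {ω | x < max (σv h ω) (σv 0 ω) * min |Z 0 ω| |Z h ω|}
        / ((∫ ω, max (σv h ω) (σv 0 ω) ^ (2 * α)) * (atail (Z 0) x) ^ 2) := by
      funext x; rw [htailM x]
    rw [← heq]
    exact this
  -- Breiman for the marginal (goal 3)
  have hmom2 : Integrable (fun ω => σv 0 ω ^ (α + (α + δ))) := by
    have : α + (α + δ) = 2 * α + δ := by ring
    rw [this]; exact hmom
  have hB1pre := breiman (hσmeas 0) (hZmeas 0).abs hindσZ hσ0pos hα
    (by linarith : (0:ℝ) < α + δ) hmom2 hrvT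
  have haes : ∀ x : ℝ, atail (X 0) x = pr {ω | x < σv 0 ω * |Z 0 ω|} := by
    intro x
    apply congrArg ENNReal.toReal
    apply measure_congr
    apply Filter.eventuallyEq_set.mpr
    filter_upwards [hσpos] with ω hω
    simp only [mem_setOf_eq, hX 0 ω, abs_mul, abs_of_pos (hω 0)]
  have hB1 : Tendsto (fun x => atail (X 0) x / ((∫ ω, σv 0 ω ^ α) * atail (Z 0) x))
      atTop (𝓝 1) := by
    apply hB1pre.congr
    intro x
    rw [haes x]
    rfl
  -- goal 1: pointwise domination
  have hdom1 : ∀ x : ℝ, pr {ω | x < |X h ω| ∧ x < |X 0 ω|}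
      ≤ pr {ω | x < max (σv h ω) (σv 0 ω) * min |Z 0 ω| |Z h ω|} := by
    intro x
    apply pr_mono_ae
    filter_upwards [hσpos] with ω hω hx
    obtain ⟨h1, h2⟩ := hx
    rw [hX h ω, abs_mul, abs_of_pos (hω h)] at h1
    rw [hX 0 ω, abs_mul, abs_of_pos (hω 0)] at h2
    show x < max (σv h ω) (σv 0 ω) * min |Z 0 ω| |Z h ω|
    rcases le_total |Z 0 ω| |Z h ω| with hmin | hmin
    · rw [min_eq_left hmin]
      calc x < σv 0 ω * |Z 0 ω| := h2
        _ ≤ max (σv h ω) (σv 0 ω) * |Z 0 ω| :=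
          mul_le_mul_of_nonneg_right (le_max_right _ _) (abs_nonneg _)
    · rw [min_eq_right hmin]
      calc x < σv h ω * |Z h ω| := h1
        _ ≤ max (σv h ω) (σv 0 ω) * |Z h ω| :=
          mul_le_mul_of_nonneg_right (le_max_left _ _) (abs_nonneg _)
  refine ⟨hdom1, hB2, hB1, ?_⟩
  -- goal 4: asymptotic independence
  have hc₁ := integral_rpow_pos (hσmeas 0) hσ0pos hα.le (by linarith : α ≤ 2 * α + δ) hmom
  have hc₂ := integral_rpow_pos hWmeas hWpos (by linarith : (0:ℝ) ≤ 2 * α)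
    (by linarith : 2 * α ≤ 2 * α + δ) hmomW
  have hc₁pos : 0 < ∫ ω, σv 0 ω ^ α := hc₁.2
  have hc₂pos : 0 < ∫ ω, max (σv h ω) (σv 0 ω) ^ (2 * α) := hc₂.2
  -- tail of Z tends to zero
  have hT0 : Tendsto (atail (Z 0)) atTop (𝓝 0) := by
    have hmeas : ∀ x : ℝ, NullMeasurableSet {ω | x < |Z 0 ω|} ℙ := fun x =>
      (measurableSet_lt measurable_const (hZmeas 0).abs).nullMeasurableSet
    have hanti : Antitone fun x : ℝ => {ω | x < |Z 0 ω|} := fun a b hab =>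
      fun ω hω => lt_of_le_of_lt hab hω
    have hfin : ∃ x : ℝ, ℙ {ω | x < |Z 0 ω|} ≠ ∞ := ⟨0, measure_ne_top _ _⟩
    have hlim := tendsto_measure_iInter_atTop hmeas hanti hfin
    have hempty : (⋂ x : ℝ, {ω | x < |Z 0 ω|}) = ∅ := by
      ext ω
      simp only [mem_iInter, mem_setOf_eq, mem_empty_iff_false, iff_false, not_forall, not_lt]
      exact ⟨|Z 0 ω|, le_rfl⟩
    rw [hempty, measure_empty] at hlim
    have := (ENNReal.tendsto_toReal (by norm_num : (0:ℝ≥0∞) ≠ ∞)).comp hlim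
    exact this
  -- eventual positivity of the denominator
  have hEpos : ∀ᶠ x in atTop, 0 < atail (X 0) x := by
    have hhalf := hB1.eventually (eventually_gt_nhds (by norm_num : (1:ℝ)/2 < 1))
    filter_upwards [hhalf] with x hx
    by_contra hcon
    push_neg at hcon
    have : atail (X 0) x / ((∫ ω, σv 0 ω ^ α) * atail (Z 0) x) ≤ 0 :=
      div_nonpos_of_nonpos_of_nonneg hcon (mul_nonneg hc₁pos.le (hTnn x))
    linarith
  -- the product bound tends to zero
  have hg : Tendsto (fun x =>
      (pr {ω | x < max (σv h ω) (σv 0 ω) * min |Z 0 ω| |Z h ω|}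
        / ((∫ ω, max (σv h ω) (σv 0 ω) ^ (2 * α)) * (atail (Z 0) x) ^ 2))
      * (((∫ ω, max (σv h ω) (σv 0 ω) ^ (2 * α)) / (∫ ω, σv 0 ω ^ α)) * atail (Z 0) x)
      * (atail (X 0) x / ((∫ ω, σv 0 ω ^ α) * atail (Z 0) x))⁻¹)
      atTop (𝓝 0) := by
    have := (hB2.mul (hT0.const_mul
      ((∫ ω, max (σv h ω) (σv 0 ω) ^ (2 * α)) / (∫ ω, σv 0 ω ^ α)))).mul
      (hB1.inv₀ one_ne_zero)
    simpa using this
  apply squeeze_zero' ?_ ?_ hg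
  · exact Eventually.of_forall fun x => div_nonneg (pr_nonneg _) (pr_nonneg _)
  · filter_upwards [hEpos] with x hEx
    have hstep : pr {ω | x < |X h ω| ∧ x < |X 0 ω|}
        ≤ pr {ω | x < max (σv h ω) (σv 0 ω) * min |Z 0 ω| |Z h ω|} := hdom1 x
    have hTx := hTpos x
    calc pr {ω | x < |X h ω| ∧ x < |X 0 ω|} / atail (X 0) x
        ≤ pr {ω | x < max (σv h ω) (σv 0 ω) * min |Z 0 ω| |Z h ω|} / atail (X 0) x := by
          gcongr
      _ = (pr {ω | x < max (σv h ω) (σv 0 ω) * min |Z 0 ω| |Z h ω|}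
            / ((∫ ω, max (σv h ω) (σv 0 ω) ^ (2 * α)) * (atail (Z 0) x) ^ 2))
          * (((∫ ω, max (σv h ω) (σv 0 ω) ^ (2 * α)) / (∫ ω, σv 0 ω ^ α)) * atail (Z 0) x)
          * (atail (X 0) x / ((∫ ω, σv 0 ω ^ α) * atail (Z 0) x))⁻¹ := by
          field_simp

end PLD
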